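/- A group homomorphism χ : E'ˣ → ℂˣ satisfies χ(β(z)) = χ(z) for all z ∈ E'ˣ if and only if there exists a group homomorphism ω : Eˣ → ℂˣ such that χ(z) = ω(N_{E'/E}(z)) for all z ∈ E'ˣ. -/

import Mathlib

noncomputable instance : RootableBy ℂˣ ℕ :=
  rootableByOfPowLeftSurj _ _ (fun {n} hn u => by
    obtain ⟨z, hz⟩ := IsAlgClosed.exists_pow_nat_eq (u : ℂ) (Nat.pos_of_ne_zero hn)
    have hz0 : z ≠ 0 := by
      intro h
      rw [h, zero_pow hn] at hz
      exact u.ne_zero hz.symm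
    exact ⟨Units.mk0 z hz0, Units.ext (by simp [hz])⟩)

noncomputable instance : RootableBy ℂˣ ℤ := Group.rootableByIntOfRootableByNat ℂˣ

noncomputable instance : DivisibleBy (Additive ℂˣ) ℤ where
  div a n := Additive.ofMul (RootableBy.root (Additive.toMul a) n)
  div_zero a := congrArg Additive.ofMul (RootableBy.root_zero (Additive.toMul a))
  div_cancel a hn := by
    show (_ : ℤ) • Additive.ofMul _ = a
    rw [← ofMul_zpow, RootableBy.root_cancel _ hn]; rfl

universe u

lemma exists_extension_to_complex_units {G : Type u} [CommGroup G] (H : Subgroup G)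
    (φ : H →* ℂˣ) : ∃ ψ : G →* ℂˣ, ∀ h : H, ψ h = φ h := by
  have hinj : Module.Injective ℤ (ULift.{u} (Additive ℂˣ)) :=
    Module.ulift_injective_of_injective ℤ
      (Module.Baer.injective (Module.Baer.of_divisible (Additive ℂˣ)))
  set i : Additive H →ₗ[ℤ] Additive G :=
    (MonoidHom.toAdditive H.subtype).toIntLinearMap with hi
  have hiinj : Function.Injective i := fun a b hab => by
    exact Subtype.coe_injective hab
  set g : Additive H →ₗ[ℤ] ULift.{u} (Additive ℂˣ) :=
    ((AddEquiv.ulift.symm.toAddMonoidHom.comp (MonoidHom.toAdditive φ)) :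
      Additive H →+ ULift (Additive ℂˣ)).toIntLinearMap with hg
  obtain ⟨h, hh⟩ := hinj.out i hiinj g
  refine ⟨MonoidHom.toAdditive.symm
    ((AddEquiv.ulift.toAddMonoidHom.comp h.toAddMonoidHom :
      Additive G →+ Additive ℂˣ)), fun x => ?_⟩
  have := congrArg (fun t => Additive.toMul (AddEquiv.ulift t)) (hh (Additive.ofMul x))
  simpa [hi, hg] using this

open groupCohomology Subgroup

lemma hilbert90_units {E E' : Type*} [Field E] [Field E'] [Algebra E E']
    [FiniteDimensional E E'] [IsGalois E E']
    (β : E' ≃ₐ[E] E') (hgen : ∀ g : E' ≃ₐ[E] E', g ∈ Subgroup.zpowers β)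
    (x : E'ˣ) (hx : Units.map (Algebra.norm E : E' →* E) x = 1) :
    ∃ y : E'ˣ, x = Units.map (β : E' →* E') y / y := by
  classical
  have hord : IsOfFinOrder β := isOfFinOrder_of_finite β
  set n := orderOf β with hn
  set P : ℕ → E'ˣ := fun a => ∏ j ∈ Finset.range a, (β ^ j) • x with hP
  have hx' : Algebra.norm E (x : E') = 1 := by
    have := congrArg Units.val hx
    simpa using this
  -- card of the Galois group is n
  have hcard : Fintype.card (E' ≃ₐ[E] E') = n := by
    have htop : Subgroup.zpowers β = ⊤ := by
      ext g; simp [hgen g]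
    rw [← Nat.card_eq_fintype_card, ← Nat.card_congr (Subgroup.topEquiv).toEquiv, ← htop,
      Nat.card_zpowers]
  have hbij : Function.Bijective (fun j : Fin n => β ^ (j : ℕ)) := by
    rw [Fintype.bijective_iff_injective_and_card]
    constructor
    · intro i j hij
      exact Fin.ext (pow_injOn_Iio_orderOf i.2 j.2 hij)
    · rw [Fintype.card_fin, hcard]
  have hPn : P n = 1 := by
    ext
    push_cast [hP, AlgEquiv.smul_units_def]
    calc ∏ j ∈ Finset.range n, (β ^ j) (x : E')
        = ∏ j : Fin n, (β ^ (j : ℕ)) (x : E') := (Fin.prod_univ_eq_prod_range _ n).symm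
      _ = ∏ σ : E' ≃ₐ[E] E', σ (x : E') :=
          (Fintype.prod_bijective _ hbij (fun j => (β ^ (j:ℕ)) (x:E')) (fun σ => σ (x:E')) (fun j => rfl))
      _ = algebraMap E E' (Algebra.norm E (x : E')) := (Algebra.norm_eq_prod_automorphisms E _).symm
      _ = 1 := by rw [hx', map_one]
  have hperiod : ∀ a, P (a + n) = P a := by
    intro a
    have h1 : ∏ j ∈ Finset.range n, (β ^ (a + j)) • x = (β ^ a) • P n := by
      rw [hP]
      rw [Finset.smul_prod']
      refine Finset.prod_congr rfl fun j _ => ?_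
      rw [pow_add, mul_smul]
    show (∏ j ∈ Finset.range (a+n), (β ^ j) • x) = P a
    rw [Finset.prod_range_add, h1, hPn, smul_one, mul_one]
  have hmod : ∀ a, P a = P (a % n) := by
    intro a
    conv_lhs => rw [← Nat.mod_add_div a n]
    generalize a / n = k
    induction k with
    | zero => simp
    | succ k ih => rw [Nat.mul_succ, ← add_assoc, hperiod, ih]
  set ind : (E' ≃ₐ[E] E') → ℕ :=
    fun g => (((finEquivZPowers (x := β) hord).symm ⟨g, hgen g⟩ : Fin n) : ℕ) with hindd
  have hind : ∀ m : ℕ, ind (β ^ m) = m % n := by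
    intro m
    have : ((finEquivZPowers (x := β) hord).symm ⟨β ^ m, ⟨m, by simp⟩⟩ : Fin n)
        = ⟨m % orderOf β, Nat.mod_lt _ hord.orderOf_pos⟩ :=
      finEquivZPowers_symm_apply (x := β) hord m
    simpa [hindd] using congrArg (Fin.val) this
  have hpow_ind : ∀ g, β ^ (ind g) = g := by
    intro g
    have := (finEquivZPowers (x := β) hord).apply_symm_apply ⟨g, hgen g⟩
    rw [finEquivZPowers_apply] at this
    exact congrArg Subtype.val this
  have hcoc : IsMulCocycle₁ (fun g => P (ind g)) := by
    intro g h
    dsimp only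
    have hab : g * h = β ^ (ind g + ind h) := by
      rw [pow_add, hpow_ind g, hpow_ind h]
    rw [hab, hind, ← hmod]
    have h1 : ∏ j ∈ Finset.range (ind h), (β ^ (ind g + j)) • x = g • P (ind h) := by
      conv_rhs => rw [← hpow_ind g]
      rw [hP]
      rw [Finset.smul_prod']
      refine Finset.prod_congr rfl fun j _ => ?_
      rw [pow_add, mul_smul]
    show (∏ j ∈ Finset.range (ind g + ind h), (β ^ j) • x) = _
    rw [Finset.prod_range_add, h1, mul_comm]
  obtain ⟨y, hy⟩ := isMulCoboundary₁_of_isMulCocycle₁_of_aut_to_units _ hcoc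
  rcases Nat.lt_or_ge 1 n with h1n | h1n
  · refine ⟨y, ?_⟩
    have hb1 : ind β = 1 := by
      have := hind 1
      rwa [pow_one, Nat.mod_eq_of_lt h1n] at this
    have := hy β
    dsimp only at this
    rw [hb1] at this
    rw [← AlgEquiv.smul_units_def]
    rw [this, hP]
    simp only [Finset.prod_range_one, pow_zero, one_smul]
  · -- n ≤ 1, so the Galois group is trivial and x = 1
    have hn1 : n = 1 := le_antisymm h1n hord.orderOf_pos
    have hxone : x = 1 := by
      have hcard1 : Fintype.card (E' ≃ₐ[E] E') = 1 := by rw [hcard, hn1]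
      have hsub : Subsingleton (E' ≃ₐ[E] E') := Fintype.card_le_one_iff_subsingleton.mp hcard1.le
      have := Algebra.norm_eq_prod_automorphisms E (x : E')
      rw [hx', map_one] at this
      have hprod : ∏ σ : E' ≃ₐ[E] E', σ (x : E') = (x : E') := by
        rw [Fintype.prod_eq_single (1 : E' ≃ₐ[E] E') (fun σ hσ => absurd (Subsingleton.elim σ 1) hσ)]
        rfl
      ext
      rw [← hprod, ← this]; simp
    exact ⟨1, by simp [hxone]⟩

theorem stmt_6 (E E' : Type*) [Field E] [Field E'] [Algebra E E']
    [FiniteDimensional E E'] [IsGalois E E']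
    (β : E' ≃ₐ[E] E')
    (hgen : ∀ g : E' ≃ₐ[E] E', g ∈ Subgroup.zpowers β)
    (χ : E'ˣ →* ℂˣ) :
    (∀ z : E'ˣ, χ (Units.map (β : E' →* E') z) = χ z) ↔
      ∃ ω : Eˣ →* ℂˣ, ∀ z : E'ˣ, χ z = ω (Units.map (Algebra.norm E : E' →* E) z) := by
  constructor
  · intro hχ
    set Nm : E'ˣ →* Eˣ := Units.map (Algebra.norm E : E' →* E) with hNm
    have hker : ∀ z ∈ Nm.ker, χ z = 1 := by
      intro z hz
      obtain ⟨y, hy⟩ := hilbert90_units β hgen z (MonoidHom.mem_ker.mp hz)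
      rw [hy, map_div, hχ y, div_self']
    set χ' : E'ˣ ⧸ Nm.ker →* ℂˣ := QuotientGroup.lift Nm.ker χ hker with hχ'
    set e : E'ˣ ⧸ Nm.ker ≃* Nm.range := QuotientGroup.quotientKerEquivRange Nm with he
    obtain ⟨ω, hω⟩ := exists_extension_to_complex_units Nm.range
      (χ'.comp (e.symm : Nm.range →* E'ˣ ⧸ Nm.ker))
    refine ⟨ω, fun z => ?_⟩
    have hmem : Nm z ∈ Nm.range := ⟨z, rfl⟩
    have h1 := hω ⟨Nm z, hmem⟩
    have h2 : e (QuotientGroup.mk z) = ⟨Nm z, hmem⟩ := rfl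
    calc χ z = χ' (QuotientGroup.mk z) := rfl
      _ = χ' (e.symm ⟨Nm z, hmem⟩) := by rw [← h2, MulEquiv.symm_apply_apply]
      _ = ω (Nm z) := h1.symm
  · rintro ⟨ω, hω⟩ z
    have hnorm : Units.map (Algebra.norm E : E' →* E) (Units.map (β : E' →* E') z)
        = Units.map (Algebra.norm E : E' →* E) z :=
      Units.ext (Algebra.norm_eq_of_algEquiv β (z : E'))
    rw [hω, hω, hnorm]
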